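/- arXiv:1803.10578 — 2 statements merged into one kernel-verified Lean document; each statement's English description precedes it below -/
import Mathlib

section
/- Let k ≥ 3 and for each i ∈ {1, …, k} let μᵢ be the uniform distribution on {1, …, k} \ {i}. Then for any coupling (Z₁, …, Z_k) of μ₁, …, μ_k there exist indices i ≠ j such that P(Zᵢ ≠ Zⱼ) ≥ 2/k. In particular, since ‖μᵢ − μⱼ‖_TV = 1/(k−1) < 2/k for all i ≠ j, no coupling of μ₁, …, μ_k induces an optimal coupling of every pair. -/
open Finset

lemma count_lb {k : ℕ} (hk : 3 ≤ k) (f : Fin k → Fin k) (hf : ∀ i, f i ≠ i) :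
    2 * (k - 1) ≤ ((univ ×ˢ univ).filter (fun p : Fin k × Fin k => f p.1 ≠ f p.2)).card := by
  classical
  set n : Fin k → ℕ := fun a => (univ.filter fun j => f j = a).card with hn
  have hcard : ((univ ×ˢ univ).filter (fun p : Fin k × Fin k => f p.1 ≠ f p.2)).card
      = ∑ i : Fin k, (k - n (f i)) := by
    rw [Finset.card_filter, Finset.sum_product]
    refine Finset.sum_congr rfl fun i _ => ?_
    have h1 : n (f i) + (univ.filter fun j => ¬ f j = f i).card = k := by
      simp only [hn]
      rw [Finset.card_filter_add_card_filter_not]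
      simp
    have h2 : ∑ j : Fin k, (if f i ≠ f j then 1 else 0)
        = (univ.filter fun j => ¬ f j = f i).card := by
      rw [Finset.card_filter]
      refine Finset.sum_congr rfl fun j _ => ?_
      by_cases h : f j = f i
      · simp [h]
      · have h' : ¬ f i = f j := fun hh => h hh.symm
        simp [h, h']
    rw [h2]
    omega
  rw [hcard]
  have hcomp : ∑ i : Fin k, (k - n (f i))
      = ∑ a ∈ univ.image f, n a * (k - n a) := by
    rw [Finset.sum_comp (fun a => k - n a) f]
    exact Finset.sum_congr rfl fun a _ => by simp [hn, smul_eq_mul]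
  rw [hcomp]
  have himg : 2 ≤ (univ.image f).card := by
    by_contra h
    push_neg at h
    have hne : (univ.image f).Nonempty :=
      ⟨f ⟨0, by omega⟩, Finset.mem_image_of_mem f (mem_univ _)⟩
    interval_cases h' : (univ.image f).card
    · exact absurd (Finset.card_eq_zero.mp h') hne.ne_empty
    · obtain ⟨a, ha⟩ := Finset.card_eq_one.mp h'
      have h1 : f a ∈ univ.image f := Finset.mem_image_of_mem f (mem_univ a)
      have hfa : f a = a := by rw [ha] at h1; simpa using h1
      exact hf a hfa
  have hterm : ∀ a ∈ univ.image f, k - 1 ≤ n a * (k - n a) := by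
    intro a ha
    have h1 : 1 ≤ n a := by
      rw [Finset.mem_image] at ha
      obtain ⟨j, _, hj⟩ := ha
      exact Finset.card_pos.mpr ⟨j, by simp [hn, hj]⟩
    have h2 : n a ≤ k - 1 := by
      have hsub : (univ.filter fun j => f j = a) ⊆ univ.erase a := by
        intro j hj
        simp only [Finset.mem_filter] at hj
        refine Finset.mem_erase.mpr ⟨?_, mem_univ _⟩
        rintro rfl
        exact hf j hj.2
      have := Finset.card_le_card hsub
      simpa [Finset.card_erase_of_mem] using this
    obtain ⟨c, hc⟩ := Nat.exists_eq_add_of_le h1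
    have hm : 1 ≤ k - n a := by omega
    obtain ⟨d, hd⟩ := Nat.exists_eq_add_of_le hm
    calc k - 1 = 1 + c + d := by omega
      _ ≤ (1 + c) * (1 + d) := by nlinarith
      _ = n a * (k - n a) := by rw [← hc, ← hd]
  calc 2 * (k - 1) ≤ (univ.image f).card * (k - 1) := Nat.mul_le_mul_right _ himg
    _ = ∑ _a ∈ univ.image f, (k - 1) := by rw [Finset.sum_const, smul_eq_mul]
    _ ≤ ∑ a ∈ univ.image f, n a * (k - n a) := Finset.sum_le_sum hterm

/-- For `μ i` uniform on `{1,…,k} \ {i}` with `k ≥ 3`, every coupling has some pair `i ≠ j`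
with disagreement probability at least `2/k`, although `‖μ i - μ j‖_TV = 1/(k-1)` for all
`i ≠ j`; in particular no coupling induces an optimal coupling of every pair. -/
theorem no_pairwise_optimal_grand_coupling
    {k : ℕ} (hk : 3 ≤ k)
    (μ : Fin k → Fin k → ℝ)
    (hμ : ∀ i a, μ i a = if a = i then 0 else ((k : ℝ) - 1)⁻¹)
    (π : (Fin k → Fin k) → ℝ)
    (hπ0 : ∀ f, 0 ≤ π f) (hπ1 : ∑ f, π f = 1)
    (hmarg : ∀ i a, ∑ f ∈ univ.filter (fun f : Fin k → Fin k => f i = a), π f = μ i a) :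
    (∃ i j : Fin k, i ≠ j ∧
        (2 : ℝ) / k ≤ ∑ f ∈ univ.filter (fun f : Fin k → Fin k => f i ≠ f j), π f) ∧
      ∀ i j : Fin k, i ≠ j →
        (1 / 2) * ∑ a, |μ i a - μ j a| = ((k : ℝ) - 1)⁻¹ := by
  classical
  have hkR : (3 : ℝ) ≤ (k : ℝ) := by exact_mod_cast hk
  have hc0 : (0 : ℝ) ≤ ((k : ℝ) - 1)⁻¹ := by
    have : (0:ℝ) < (k : ℝ) - 1 := by linarith
    exact (inv_pos.mpr this).le
  constructor
  · -- existence of a bad pair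
    have hfix : ∀ f : Fin k → Fin k, π f ≠ 0 → ∀ i, f i ≠ i := by
      intro f hfne i hfi
      have h0 : ∑ g ∈ univ.filter (fun g : Fin k → Fin k => g i = i), π g = 0 := by
        rw [hmarg, hμ]; simp
      have := (Finset.sum_eq_zero_iff_of_nonneg (fun g _ => hπ0 g)).mp h0 f
        (by simp [hfi])
      exact hfne this
    set s := (univ ×ˢ univ).filter (fun p : Fin k × Fin k => p.1 ≠ p.2) with hs
    have hscard : s.card = k * (k - 1) := by
      rw [hs, Finset.card_filter, Finset.sum_product]
      have : ∀ i : Fin k, ∑ j : Fin k, (if i ≠ j then 1 else 0) = k - 1 := by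
        intro i
        rw [← Finset.card_filter]
        have : (univ.filter fun j => i ≠ j) = univ.erase i := by
          ext j; simp [eq_comm, ne_comm, Finset.mem_erase]
        rw [this, Finset.card_erase_of_mem (mem_univ i)]
        simp
      rw [Finset.sum_congr rfl fun i _ => this i, Finset.sum_const, smul_eq_mul]
      simp
    have hsne : s.Nonempty := by
      refine ⟨(⟨0, by omega⟩, ⟨1, by omega⟩), ?_⟩
      simp [hs, Fin.ext_iff]
    -- the double sum identity and lower bound
    have key : ∑ p ∈ s, (2 : ℝ) / k ≤
        ∑ p ∈ s, ∑ f ∈ univ.filter (fun f : Fin k → Fin k => f p.1 ≠ f p.2), π f := by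
      have lhs_eq : ∑ p ∈ s, (2 : ℝ) / k = 2 * ((k : ℝ) - 1) := by
        rw [Finset.sum_const, hscard, nsmul_eq_mul]
        have hk1 : (1 : ℕ) ≤ k := by omega
        push_cast [Nat.cast_sub hk1]
        field_simp
      rw [lhs_eq]
      have step1 : ∑ p ∈ s, ∑ f ∈ univ.filter (fun f : Fin k → Fin k => f p.1 ≠ f p.2), π f
          = ∑ p ∈ univ ×ˢ univ, ∑ f ∈ univ.filter (fun f : Fin k → Fin k => f p.1 ≠ f p.2), π f := by
        refine Finset.sum_subset (Finset.filter_subset _ _) ?_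
        intro p _ hp
        have hpe : p.1 = p.2 := by
          by_contra hne
          exact hp (by simp [hs, hne])
        rw [← hpe]
        simp
      have step2 : ∑ p ∈ univ ×ˢ univ, ∑ f ∈ univ.filter (fun f : Fin k → Fin k => f p.1 ≠ f p.2), π f
          = ∑ f : Fin k → Fin k, π f *
            (((univ ×ˢ univ).filter (fun p : Fin k × Fin k => f p.1 ≠ f p.2)).card : ℝ) := by
        have : ∀ p ∈ univ ×ˢ univ, ∑ f ∈ univ.filter (fun f : Fin k → Fin k => f p.1 ≠ f p.2), π f
            = ∑ f : Fin k → Fin k, (if f p.1 ≠ f p.2 then π f else 0) :=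
          fun p _ => (Finset.sum_filter _ _)
        rw [Finset.sum_congr rfl this, Finset.sum_comm]
        refine Finset.sum_congr rfl fun f _ => ?_
        rw [← Finset.sum_filter, Finset.sum_const, nsmul_eq_mul, mul_comm]
      rw [step1, step2]
      have bound : ∀ f : Fin k → Fin k, 2 * ((k : ℝ) - 1) * π f ≤ π f *
          (((univ ×ˢ univ).filter (fun p : Fin k × Fin k => f p.1 ≠ f p.2)).card : ℝ) := by
        intro f
        rcases eq_or_ne (π f) 0 with h | h
        · simp [h]
        · have hN := count_lb hk f (hfix f h)
          have hNR : 2 * ((k : ℝ) - 1) ≤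
              (((univ ×ˢ univ).filter (fun p : Fin k × Fin k => f p.1 ≠ f p.2)).card : ℝ) := by
            have hk1 : (1 : ℕ) ≤ k := by omega
            calc 2 * ((k : ℝ) - 1) = ((2 * (k - 1) : ℕ) : ℝ) := by
                  push_cast [Nat.cast_sub hk1]; ring
              _ ≤ _ := by exact_mod_cast hN
          have hp : 0 < π f := lt_of_le_of_ne (hπ0 f) (Ne.symm h)
          calc 2 * ((k : ℝ) - 1) * π f ≤
              (((univ ×ˢ univ).filter (fun p : Fin k × Fin k => f p.1 ≠ f p.2)).card : ℝ) * π f :=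
                mul_le_mul_of_nonneg_right hNR hp.le
            _ = _ := mul_comm _ _
      calc 2 * ((k : ℝ) - 1) = ∑ f : Fin k → Fin k, 2 * ((k : ℝ) - 1) * π f := by
            rw [← Finset.mul_sum, hπ1, mul_one]
        _ ≤ _ := Finset.sum_le_sum fun f _ => bound f
    obtain ⟨p, hps, hple⟩ := Finset.exists_le_of_sum_le hsne key
    have hpne : p.1 ≠ p.2 := by
      rw [hs] at hps
      exact (Finset.mem_filter.mp hps).2
    exact ⟨p.1, p.2, hpne, hple⟩
  · -- TV distance computation
    intro i j hij
    have hpt : ∀ a : Fin k, |μ i a - μ j a| =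
        (if a = i then ((k : ℝ) - 1)⁻¹ else 0) + (if a = j then ((k : ℝ) - 1)⁻¹ else 0) := by
      intro a
      rw [hμ, hμ]
      by_cases hai : a = i <;> by_cases haj : a = j
      · exact absurd (hai.symm.trans haj) hij
      · simp [hai, haj, hij, Ne.symm hij, abs_of_nonneg hc0]
      · simp [hai, haj, hij, Ne.symm hij, abs_of_nonneg hc0]
      · simp [hai, haj]
    rw [Finset.sum_congr rfl fun a _ => hpt a, Finset.sum_add_distrib]
    simp only [Finset.sum_ite_eq', Finset.mem_univ, if_true]
    ring
end

section
/- Let k ≥ 3, and for each i ∈ {1, …, k} let μᵢ be the uniform distribution on {1, …, k} \ {i}. Fix 2 ≤ m ≤ k−1. Then: (a) for any subset {i₁, …, i_m} ⊆ {1, …, k} of size m, ∑_{a=1}^{k} min{μ_{i₁}(a), …, μ_{i_m}(a)} = 1 − (m−1)/(k−1); and (b) for any coupling (Z₁, …, Z_k) of μ₁, …, μ_k, there exists a subset {i₁, …, i_m} of size m such that P(Z_{i₁} = ⋯ = Z_{i_m}) ≤ 1 − m/k. Since 1 − m/k < 1 − (m−1)/(k−1), no coupling of μ₁, …, μ_k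 induces an optimal coupling of every m-element subcollection. -/
open Finset
open scoped Classical

private lemma count_const_le {k m : ℕ} (hk : 3 ≤ k) (hm2 : 2 ≤ m)
    (f : Fin k → Fin k) (hf : ∀ i, f i ≠ i) :
    (((univ : Finset (Fin k)).powersetCard m).filter
        (fun I => ∀ i ∈ I, ∀ j ∈ I, f i = f j)).card ≤ (k - 1).choose m := by
  have hk0 : 0 < k := by omega
  set z : Fin k := ⟨0, hk0⟩ with hz
  have target_card : (((univ : Finset (Fin k)).erase z).powersetCard m).card
      = (k - 1).choose m := by
    rw [Finset.card_powersetCard, Finset.card_erase_of_mem (mem_univ z), Finset.card_univ,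
      Fintype.card_fin]
  rw [← target_card]
  apply Finset.card_le_card_of_injOn
    (fun I => if z ∈ I then insert (f z) (I.erase z) else I)
  · -- maps to
    intro I hI
    rw [Finset.mem_coe, Finset.mem_filter, Finset.mem_powersetCard] at hI
    rw [Finset.mem_coe]
    obtain ⟨⟨-, hIcard⟩, hIconst⟩ := hI
    by_cases hzI : z ∈ I
    · have hfzI : f z ∉ I := fun hfzI => hf (f z) (hIconst (f z) hfzI z hzI)
      have hfze : f z ∉ I.erase z := fun h => hfzI (Finset.mem_of_mem_erase h)
      simp only [if_pos hzI]
      rw [Finset.mem_powersetCard]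
      constructor
      · intro x hx
        rcases Finset.mem_insert.mp hx with h | h
        · subst h; exact Finset.mem_erase.mpr ⟨hf z, mem_univ _⟩
        · exact Finset.mem_erase.mpr ⟨(Finset.mem_erase.mp h).1, mem_univ _⟩
      · rw [Finset.card_insert_of_notMem hfze, Finset.card_erase_of_mem hzI, hIcard]
        omega
    · simp only [if_neg hzI]
      rw [Finset.mem_powersetCard]
      exact ⟨fun x hx => Finset.mem_erase.mpr ⟨fun h => hzI (h ▸ hx), mem_univ _⟩, hIcard⟩
  · -- injective
    intro I hI J hJ heq
    rw [Finset.coe_filter, Set.mem_setOf_eq, Finset.mem_powersetCard] at hI hJ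
    obtain ⟨⟨-, hIcard⟩, hIconst⟩ := hI
    obtain ⟨⟨-, hJcard⟩, hJconst⟩ := hJ
    have hfzI : z ∈ I → f z ∉ I := fun hzI hfzI => hf (f z) (hIconst (f z) hfzI z hzI)
    have hfzJ : z ∈ J → f z ∉ J := fun hzJ hfzJ => hf (f z) (hJconst (f z) hfzJ z hzJ)
    -- helper for mixed case
    have mixed : ∀ (A B : Finset (Fin k)), A.card = m → (∀ i ∈ A, ∀ j ∈ A, f i = f j) →
        (∀ i ∈ B, ∀ j ∈ B, f i = f j) → z ∈ A → f z ∉ A →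
        insert (f z) (A.erase z) = B → False := by
      intro A B hAcard hAconst hBconst hzA hfzA hAB
      have hne : (A.erase z).Nonempty := by
        rw [← Finset.card_pos, Finset.card_erase_of_mem hzA, hAcard]; omega
      obtain ⟨x, hx⟩ := hne
      have hxA : x ∈ A := Finset.mem_of_mem_erase hx
      have hxB : x ∈ B := hAB ▸ Finset.mem_insert_of_mem hx
      have hfzB : f z ∈ B := hAB ▸ Finset.mem_insert_self _ _
      have h1 : f x = f z := hAconst x hxA z hzA
      have h2 : f x = f (f z) := hBconst x hxB (f z) hfzB
      exact hf (f z) (h2.symm.trans h1)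
    by_cases hzI : z ∈ I <;> by_cases hzJ : z ∈ J
    · simp only [if_pos hzI, if_pos hzJ] at heq
      have hfzeI : f z ∉ I.erase z := fun h => hfzI hzI (Finset.mem_of_mem_erase h)
      have hfzeJ : f z ∉ J.erase z := fun h => hfzJ hzJ (Finset.mem_of_mem_erase h)
      have : I.erase z = J.erase z := by
        have := congrArg (fun s => Finset.erase s (f z)) heq
        simpa [Finset.erase_insert hfzeI, Finset.erase_insert hfzeJ] using this
      rw [← Finset.insert_erase hzI, ← Finset.insert_erase hzJ, this]
    · simp only [if_pos hzI, if_neg hzJ] at heq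
      exact absurd heq (fun h => mixed I J hIcard hIconst hJconst hzI (hfzI hzI) h)
    · simp only [if_neg hzI, if_pos hzJ] at heq
      exact absurd heq.symm (fun h => mixed J I hJcard hJconst hIconst hzJ (hfzJ hzJ) h)
    · simpa only [if_neg hzI, if_neg hzJ] using heq

/-- For `μ i` uniform on `{1,…,k} \ {i}` and `2 ≤ m ≤ k-1`:
(a) every `m`-element subcollection has `∑_a min_i μ i a = 1 - (m-1)/(k-1)`;
(b) for every grand coupling there is an `m`-element subset whose agreement
probability is at most `1 - m/k`, and `1 - m/k < 1 - (m-1)/(k-1)`.  Hence no grand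
coupling induces an optimal coupling of every `m`-element subcollection. -/
theorem no_m_wise_optimal_grand_coupling
    {k m : ℕ} (hk : 3 ≤ k) (hm2 : 2 ≤ m) (hmk : m ≤ k - 1)
    (μ : Fin k → Fin k → ℝ)
    (hμ : ∀ i a, μ i a = if a = i then 0 else ((k : ℝ) - 1)⁻¹) :
    (∀ I : Finset (Fin k), ∀ hI : I.Nonempty, I.card = m →
        ∑ a, I.inf' hI (fun i => μ i a) = 1 - ((m : ℝ) - 1) / ((k : ℝ) - 1)) ∧
      (∀ π : (Fin k → Fin k) → ℝ,
        (∀ f, 0 ≤ π f) → (∑ f, π f = 1) →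
        (∀ i a, ∑ f ∈ univ.filter (fun f : Fin k → Fin k => f i = a), π f = μ i a) →
        ∃ I : Finset (Fin k), I.card = m ∧
          ∑ f ∈ univ.filter (fun f : Fin k → Fin k => ∀ i ∈ I, ∀ j ∈ I, f i = f j), π f
            ≤ 1 - (m : ℝ) / k) ∧
      1 - (m : ℝ) / k < 1 - ((m : ℝ) - 1) / ((k : ℝ) - 1) := by
  have hmklt : m < k := by omega
  have hkR : (0 : ℝ) < (k : ℝ) - 1 := by
    have : (3 : ℝ) ≤ (k : ℝ) := by exact_mod_cast hk
    linarith
  have hkR0 : (0 : ℝ) < (k : ℝ) := by linarith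
  refine ⟨?_, ?_, ?_⟩
  · -- part (a)
    intro I hI hIm
    have hterm : ∀ a : Fin k,
        I.inf' hI (fun i => μ i a) = if a ∈ I then 0 else ((k : ℝ) - 1)⁻¹ := by
      intro a
      by_cases ha : a ∈ I
      · rw [if_pos ha]
        apply le_antisymm
        · have h := Finset.inf'_le (fun i => μ i a) ha
          exact h.trans (by simp [hμ])
        · apply Finset.le_inf'
          intro i hi
          rw [hμ]
          split
          · exact le_refl _
          · exact inv_nonneg.mpr hkR.le
      · rw [if_neg ha]
        have hcg : I.inf' hI (fun i => μ i a) = I.inf' hI (fun _ => ((k : ℝ) - 1)⁻¹) :=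
          Finset.inf'_congr (H := hI) rfl
            (fun i hi => by rw [hμ]; exact if_neg (fun h : a = i => ha (h ▸ hi)))
        rw [hcg, Finset.inf'_const]
    rw [Finset.sum_congr rfl (fun a _ => hterm a)]
    have : ∀ a : Fin k, (if a ∈ I then (0:ℝ) else ((k:ℝ)-1)⁻¹)
        = ((k:ℝ)-1)⁻¹ - (if a ∈ I then ((k:ℝ)-1)⁻¹ else 0) := by
      intro a; split <;> ring
    rw [Finset.sum_congr rfl (fun a _ => this a), Finset.sum_sub_distrib,
      Finset.sum_const, Finset.sum_ite_mem, Finset.univ_inter, Finset.sum_const,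
      Finset.card_univ, Fintype.card_fin, hIm]
    have hm : (2 : ℝ) ≤ (m : ℝ) := by exact_mod_cast hm2
    field_simp
    simp only [nsmul_eq_mul]
    rw [← sub_mul, mul_comm, mul_assoc, one_div_mul_cancel hkR.ne', mul_one]
    ring
  · -- part (b)
    intro π hπ hπ1 hmarg
    have hzero : ∀ f : Fin k → Fin k, (∃ i, f i = i) → π f = 0 := by
      rintro f ⟨i, hfi⟩
      have h := hmarg i i
      rw [hμ, if_pos rfl] at h
      exact (Finset.sum_eq_zero_iff_of_nonneg (fun g _ => hπ g)).mp h f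
        (Finset.mem_filter.mpr ⟨mem_univ _, hfi⟩)
    set S := (univ : Finset (Fin k)).powersetCard m with hSdef
    have hScard : S.card = k.choose m := by
      rw [hSdef, Finset.card_powersetCard, Finset.card_univ, Fintype.card_fin]
    have hSne : S.Nonempty := by
      rw [← Finset.card_pos, hScard]
      exact Nat.choose_pos hmklt.le
    have key : ∑ I ∈ S,
        ∑ f ∈ univ.filter (fun f : Fin k → Fin k => ∀ i ∈ I, ∀ j ∈ I, f i = f j), π f
        ≤ ((k - 1).choose m : ℝ) := by
      have swap : ∑ I ∈ S,
          ∑ f ∈ univ.filter (fun f : Fin k → Fin k => ∀ i ∈ I, ∀ j ∈ I, f i = f j), π f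
          = ∑ f : Fin k → Fin k,
            ((S.filter (fun I => ∀ i ∈ I, ∀ j ∈ I, f i = f j)).card : ℝ) * π f := by
        simp_rw [Finset.sum_filter]
        rw [Finset.sum_comm]
        refine Finset.sum_congr rfl fun f _ => ?_
        rw [← Finset.sum_filter, Finset.sum_const, nsmul_eq_mul]
      rw [swap]
      calc ∑ f : Fin k → Fin k,
            ((S.filter (fun I => ∀ i ∈ I, ∀ j ∈ I, f i = f j)).card : ℝ) * π f
          ≤ ∑ f : Fin k → Fin k, ((k - 1).choose m : ℝ) * π f := by
            apply Finset.sum_le_sum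
            intro f _
            by_cases hfp : ∃ i, f i = i
            · rw [hzero f hfp, mul_zero, mul_zero]
            · push_neg at hfp
              exact mul_le_mul_of_nonneg_right
                (by exact_mod_cast count_const_le hk hm2 f hfp) (hπ f)
        _ = ((k - 1).choose m : ℝ) := by rw [← Finset.mul_sum, hπ1, mul_one]
    have hcast : ((k - 1).choose m : ℝ) * k = (k.choose m : ℝ) * ((k : ℝ) - m) := by
      have hnat := Nat.choose_mul_succ_eq (k - 1) m
      have h1 : k - 1 + 1 = k := by omega
      rw [h1] at hnat
      have h2 := congrArg (Nat.cast (R := ℝ)) hnat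
      push_cast [Nat.cast_sub hmklt.le] at h2
      linarith
    have havg : ∃ I ∈ S,
        ∑ f ∈ univ.filter (fun f : Fin k → Fin k => ∀ i ∈ I, ∀ j ∈ I, f i = f j), π f
          ≤ 1 - (m : ℝ) / k := by
      apply Finset.exists_le_of_sum_le hSne
      calc ∑ I ∈ S,
            ∑ f ∈ univ.filter (fun f : Fin k → Fin k => ∀ i ∈ I, ∀ j ∈ I, f i = f j), π f
          ≤ ((k - 1).choose m : ℝ) := key
        _ = ∑ _I ∈ S, (1 - (m : ℝ) / k) := by
            rw [Finset.sum_const, hScard, nsmul_eq_mul]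
            field_simp
            linarith [hcast]
    obtain ⟨I, hIS, hle⟩ := havg
    exact ⟨I, (Finset.mem_powersetCard.mp hIS).2, hle⟩
  · -- part (c)
    have hmR : (2 : ℝ) ≤ (m : ℝ) := by exact_mod_cast hm2
    have hmkR : (m : ℝ) < (k : ℝ) := by exact_mod_cast hmklt
    have : ((m : ℝ) - 1) / ((k : ℝ) - 1) < (m : ℝ) / k := by
      rw [div_lt_div_iff₀ hkR hkR0]
      nlinarith
    linarith
end
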